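/- Let n ≥ 2 and u ∈ ℂ. Let γ = (γ_1,…,γ_k) be a composition of n with blocks B_j = {γ_1+⋯+γ_{j−1}+1, …, γ_1+⋯+γ_j}, and set w_γ = w_{γ_1} ⋯ w_{γ_k} ∈ S_n, where w_{γ_j} = s_{a+1} s_{a+2} ⋯ s_{a+γ_j−1} with a = γ_1+⋯+γ_{j−1}. Let I ⊆ {1,…,n} with |I| even, and set I_j = I ∩ B_j. If |I_j| is even for every j, then there exists ε ∈ {1, −1} such that w_γ c_I − ε w_γ ∈ [ℌ_A, ℌ_A]; otherwise w_γ c_I ∈ [ℌ_A, ℌ_A]. -/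

import Mathlib

open scoped BigOperators

namespace DAHCA

/-- Generators of the degenerate affine Hecke-Clifford algebra of type `A_{n-1}`. -/
inductive Gen (n : ℕ) : Type
  | x : Fin n → Gen n
  | c : Fin n → Gen n
  | w : Equiv.Perm (Fin n) → Gen n

noncomputable def X (n : ℕ) (i : Fin n) : FreeAlgebra ℂ (Gen n) := FreeAlgebra.ι ℂ (Gen.x i)
noncomputable def C (n : ℕ) (i : Fin n) : FreeAlgebra ℂ (Gen n) := FreeAlgebra.ι ℂ (Gen.c i)
noncomputable def W (n : ℕ) (σ : Equiv.Perm (Fin n)) : FreeAlgebra ℂ (Gen n) :=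
  FreeAlgebra.ι ℂ (Gen.w σ)

/-- The simple transposition `s_{i+1} = (i, i+1)` (0-indexed). -/
def sA (n : ℕ) (i : ℕ) (h : i + 1 < n) : Equiv.Perm (Fin n) :=
  Equiv.swap ⟨i, Nat.lt_of_succ_lt h⟩ ⟨i + 1, h⟩

/-- The defining relations of the degenerate affine Hecke-Clifford algebra of type
`A_{n-1}` with parameter `u`. -/
inductive Rel (n : ℕ) (u : ℂ) : FreeAlgebra ℂ (Gen n) → FreeAlgebra ℂ (Gen n) → Prop
  | xx (i j : Fin n) : Rel n u (X n i * X n j) (X n j * X n i)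
  | csq (i : Fin n) : Rel n u (C n i * C n i) 1
  | cc (i j : Fin n) (hij : i ≠ j) : Rel n u (C n i * C n j) (-(C n j * C n i))
  | ww (σ τ : Equiv.Perm (Fin n)) : Rel n u (W n σ * W n τ) (W n (σ * τ))
  | wone : Rel n u (W n 1) 1
  | xc (i : Fin n) : Rel n u (X n i * C n i) (-(C n i * X n i))
  | xc' (i j : Fin n) (hij : i ≠ j) : Rel n u (X n i * C n j) (C n j * X n i)
  | wc (σ : Equiv.Perm (Fin n)) (i : Fin n) : Rel n u (W n σ * C n i) (C n (σ i) * W n σ)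
  | cross (i : ℕ) (h : i + 1 < n) :
      Rel n u (X n ⟨i + 1, h⟩ * W n (sA n i h) - W n (sA n i h) * X n ⟨i, Nat.lt_of_succ_lt h⟩)
        (u • (1 - C n ⟨i + 1, h⟩ * C n ⟨i, Nat.lt_of_succ_lt h⟩))
  | xw (i : ℕ) (h : i + 1 < n) (j : Fin n) (h1 : (j : ℕ) ≠ i) (h2 : (j : ℕ) ≠ i + 1) :
      Rel n u (X n j * W n (sA n i h)) (W n (sA n i h) * X n j)

/-- The degenerate affine Hecke-Clifford algebra of type `A_{n-1}` with parameter `u`. -/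
abbrev HA (n : ℕ) (u : ℂ) := RingQuot (Rel n u)

noncomputable def xH (n : ℕ) (u : ℂ) (i : Fin n) : HA n u :=
  RingQuot.mkAlgHom ℂ (Rel n u) (X n i)
noncomputable def cH (n : ℕ) (u : ℂ) (i : Fin n) : HA n u :=
  RingQuot.mkAlgHom ℂ (Rel n u) (C n i)
noncomputable def wH (n : ℕ) (u : ℂ) (σ : Equiv.Perm (Fin n)) : HA n u :=
  RingQuot.mkAlgHom ℂ (Rel n u) (W n σ)

/-- The linear span of all commutators in an algebra `A`; the cocenter is `A` modulo
this subspace. -/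
def commSpan (A : Type*) [Ring A] [Algebra ℂ A] : Submodule ℂ A :=
  Submodule.span ℂ {z : A | ∃ a b : A, z = a * b - b * a}

/-- The ordered product `c_{i_1} c_{i_2} ⋯ c_{i_m}` over `I = {i_1 < i_2 < ⋯ < i_m}`. -/
noncomputable def cProd (n : ℕ) (u : ℂ) (I : Finset (Fin n)) : HA n u :=
  ((I.sort (· ≤ ·)).map (cH n u)).prod

/-- The cycle `(a, a+1, …, b-1)` expressed as the product of the simple transpositions
`s_{a+1} s_{a+2} ⋯ s_{b-1}` (1-indexed), i.e. `(a,a+1)(a+1,a+2)⋯(b-2,b-1)` (0-indexed). -/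
def wSeg (n : ℕ) (a b : ℕ) : Equiv.Perm (Fin n) :=
  ((List.range (b - a - 1)).map fun j =>
    if h : a + j + 1 < n then sA n (a + j) h else 1).prod

end DAHCA
namespace DAHCA

/-- The permutation `w_γ` attached to a composition `γ` of `n`: the product of the
cycles on the consecutive blocks of `γ`. -/
def wGamma (n : ℕ) (γ : List ℕ) : Equiv.Perm (Fin n) :=
  ((List.range γ.length).map fun k => wSeg n ((γ.take k).sum) ((γ.take (k + 1)).sum)).prod
section AlgebraLayer
variable (n : ℕ) (u : ℂ)

noncomputable def cL (L : List (Fin n)) : HA n u := (L.map (cH n u)).prod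

lemma comm_mem (a b : HA n u) : a * b - b * a ∈ commSpan (HA n u) :=
  Submodule.subset_span ⟨a, b, rfl⟩

lemma conj_mem (g h x : HA n u) (hgh : g * h = 1) :
    h * x * g - x ∈ commSpan (HA n u) := by
  have h1 := comm_mem n u h (x * g)
  have hx : x * g * h = x := by rw [mul_assoc, hgh, mul_one]
  rw [hx, ← mul_assoc] at h1
  exact h1

lemma rel_eq {a b : FreeAlgebra ℂ (Gen n)} (h : Rel n u a b) :
    RingQuot.mkAlgHom ℂ (Rel n u) a = RingQuot.mkAlgHom ℂ (Rel n u) b :=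
  RingQuot.mkAlgHom_rel ℂ h

lemma c_sq (i : Fin n) : cH n u i * cH n u i = 1 := by
  have := rel_eq n u (Rel.csq i)
  simpa [cH, map_mul, map_one] using this

lemma c_anti {i j : Fin n} (hij : i ≠ j) :
    cH n u i * cH n u j = -(cH n u j * cH n u i) := by
  have := rel_eq n u (Rel.cc i j hij)
  simpa [cH, map_mul, map_neg] using this

lemma w_mul (σ τ : Equiv.Perm (Fin n)) : wH n u σ * wH n u τ = wH n u (σ * τ) := by
  have := rel_eq n u (Rel.ww σ τ)
  simpa [wH, map_mul] using this

lemma w_one : wH n u 1 = 1 := by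
  have := rel_eq n u (Rel.wone (n := n))
  simpa [wH, map_one] using this

lemma w_c (σ : Equiv.Perm (Fin n)) (i : Fin n) :
    wH n u σ * cH n u i = cH n u (σ i) * wH n u σ := by
  have := rel_eq n u (Rel.wc σ i)
  simpa [wH, cH, map_mul] using this

lemma c_w (σ : Equiv.Perm (Fin n)) (i : Fin n) :
    cH n u i * wH n u σ = wH n u σ * cH n u (σ⁻¹ i) := by
  have := (w_c n u σ (σ⁻¹ i)).symm
  simpa using this

lemma cL_nil : cL n u [] = 1 := rfl

lemma cL_cons (a : Fin n) (L : List (Fin n)) :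
    cL n u (a :: L) = cH n u a * cL n u L := by simp [cL]

lemma w_cL (σ : Equiv.Perm (Fin n)) (L : List (Fin n)) :
    wH n u σ * cL n u L = cL n u (L.map σ) * wH n u σ := by
  induction L with
  | nil => simp [cL]
  | cons a L ih =>
    rw [cL_cons, ← mul_assoc, w_c, mul_assoc, ih, List.map_cons, cL_cons, mul_assoc]

lemma cL_mul_c (M : List (Fin n)) (a : Fin n) (hM : ∀ m ∈ M, m ≠ a) :
    cL n u M * cH n u a = ((-1 : ℂ) ^ M.length) • (cH n u a * cL n u M) := by
  induction M with
  | nil => simp [cL]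
  | cons m M ih =>
    have hm : m ≠ a := hM m (List.mem_cons_self (a := m) (l := M))
    have ih' := ih (fun x hx => hM x (List.mem_cons_of_mem m hx))
    rw [cL_cons, mul_assoc, ih', mul_smul_comm, ← mul_assoc, c_anti n u hm,
      List.length_cons, pow_succ, mul_comm ((-1:ℂ) ^ M.length) (-1:ℂ), mul_smul,
      neg_mul (cH n u a * cH n u m) (cL n u M), smul_neg, neg_one_smul ℂ, mul_assoc]

lemma trans_smul (x y z : HA n u) (c c' : ℂ) (h1 : x - c • y ∈ commSpan (HA n u))
    (h2 : y - c' • z ∈ commSpan (HA n u)) : x - (c * c') • z ∈ commSpan (HA n u) := by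
  have h3 := Submodule.add_mem _ h1 (Submodule.smul_mem _ c h2)
  have e : x - c • y + c • (y - c' • z) = x - (c * c') • z := by
    rw [smul_sub, smul_smul]; abel
  rwa [e] at h3

lemma single_step (σ : Equiv.Perm (Fin n)) (a : Fin n) (M : List (Fin n))
    (hM : ∀ m ∈ M, m ≠ σ a) :
    wH n u σ * cL n u (a :: M) -
      ((-1 : ℂ) ^ M.length) • (wH n u σ * cL n u (σ a :: M)) ∈ commSpan (HA n u) := by
  have key := conj_mem n u (cH n u (σ a)) (cH n u (σ a))
    (wH n u σ * cL n u (a :: M)) (c_sq n u (σ a))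
  have calc1 : cH n u (σ a) * (wH n u σ * cL n u (a :: M)) * cH n u (σ a)
      = ((-1 : ℂ) ^ M.length) • (wH n u σ * cL n u (σ a :: M)) := by
    rw [← mul_assoc (cH n u (σ a)), c_w, Equiv.Perm.inv_def, Equiv.symm_apply_apply, cL_cons,
      mul_assoc (wH n u σ), ← mul_assoc (cH n u a), c_sq, one_mul, mul_assoc,
      cL_mul_c n u M (σ a) hM, mul_smul_comm, cL_cons]
  rw [calc1] at key
  have := Submodule.neg_mem _ key
  rwa [neg_sub] at this

lemma pair_end (σ : Equiv.Perm (Fin n)) (a b : Fin n) (M : List (Fin n))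
    (hab : σ a = b) (hb : ∀ m ∈ M, m ≠ b) :
    wH n u σ * cL n u (a :: b :: M) -
      ((-1 : ℂ) ^ M.length) • (wH n u σ * cL n u M) ∈ commSpan (HA n u) := by
  have key := conj_mem n u (cH n u b) (cH n u b)
    (wH n u σ * cL n u (a :: b :: M)) (c_sq n u b)
  have calc1 : cH n u b * (wH n u σ * cL n u (a :: b :: M)) * cH n u b
      = ((-1 : ℂ) ^ M.length) • (wH n u σ * cL n u M) := by
    have hinv : σ⁻¹ b = a := by rw [← hab, Equiv.Perm.inv_def, Equiv.symm_apply_apply]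
    rw [← mul_assoc (cH n u b), c_w, hinv, cL_cons, cL_cons, mul_assoc (wH n u σ),
      ← mul_assoc (cH n u a), c_sq, one_mul, mul_assoc, mul_assoc,
      cL_mul_c n u M b hb, mul_smul_comm, mul_smul_comm,
      ← mul_assoc (cH n u b), c_sq, one_mul]
  rw [calc1] at key
  have := Submodule.neg_mem _ key
  rwa [neg_sub] at this

lemma tau_move (σ τ : Equiv.Perm (Fin n)) (hc : τ * σ = σ * τ) (L : List (Fin n)) :
    wH n u σ * cL n u L - wH n u σ * cL n u (L.map τ) ∈ commSpan (HA n u) := by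
  have key := conj_mem n u (wH n u τ⁻¹) (wH n u τ) (wH n u σ * cL n u L)
    (by rw [w_mul, inv_mul_cancel, w_one])
  have calc1 : wH n u τ * (wH n u σ * cL n u L) * wH n u τ⁻¹
      = wH n u σ * cL n u (L.map τ) := by
    rw [← mul_assoc, w_mul, hc, ← w_mul, mul_assoc (wH n u σ), w_cL n u τ L,
      mul_assoc, mul_assoc, w_mul, mul_inv_cancel, w_one, mul_one]
  rw [calc1] at key
  have := Submodule.neg_mem _ key
  rwa [neg_sub] at this

lemma map_id_of_fix {α : Type*} (f : α → α) : ∀ (L : List α), (∀ x ∈ L, f x = x) → L.map f = L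
  | [], _ => rfl
  | a :: L, h => by
    rw [List.map_cons, h a (List.mem_cons_self (a := a) (l := L)),
      map_id_of_fix f L (fun x hx => h x (List.mem_cons_of_mem a hx))]

lemma odd_trick (σ τ : Equiv.Perm (Fin n)) (hc : τ * σ = σ * τ)
    (a : Fin n) (M : List (Fin n)) (hτa : τ a = σ a) (hτM : M.map τ = M)
    (hM : ∀ m ∈ M, m ≠ σ a) (hodd : Odd M.length) :
    wH n u σ * cL n u (a :: M) ∈ commSpan (HA n u) := by
  set X := wH n u σ * cL n u (a :: M) with hX
  set Y := wH n u σ * cL n u (σ a :: M) with hY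
  have h1 : X + Y ∈ commSpan (HA n u) := by
    have := single_step n u σ a M hM
    rwa [hodd.neg_one_pow,
      neg_one_smul ℂ (wH n u σ * cL n u (σ a :: M)), sub_neg_eq_add] at this
  have h2 : X - Y ∈ commSpan (HA n u) := by
    have := tau_move n u σ τ hc (a :: M)
    rwa [List.map_cons, hτa, hτM] at this
  have h3 := Submodule.add_mem _ h1 h2
  have e : X + Y + (X - Y) = (2 : ℂ) • X := by
    rw [two_smul]; abel
  rw [e] at h3
  have := Submodule.smul_mem _ ((2 : ℂ)⁻¹) h3
  rwa [smul_smul, inv_mul_cancel₀ (two_ne_zero), one_smul] at this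

end AlgebraLayer
section PermLayer
variable (n : ℕ)

def prodSwap (a m : ℕ) : Equiv.Perm (Fin n) :=
  ((List.range m).map fun j => if h : a + j + 1 < n then sA n (a + j) h else 1).prod

lemma wSeg_eq_prodSwap (a b : ℕ) : wSeg n a b = prodSwap n a (b - a - 1) := rfl

lemma prodSwap_zero (a : ℕ) : prodSwap n a 0 = 1 := rfl

lemma prodSwap_succ (a m : ℕ) :
    prodSwap n a (m + 1) =
      prodSwap n a m * (if h : a + m + 1 < n then sA n (a + m) h else 1) := by
  simp [prodSwap, List.range_succ]

lemma prod_fix {α : Type*} (x : α) : ∀ (ps : List (Equiv.Perm α)),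
    (∀ p ∈ ps, p x = x) → ps.prod x = x
  | [], _ => rfl
  | p :: ps, h => by
    rw [List.prod_cons, Equiv.Perm.mul_apply, prod_fix x ps
      (fun q hq => h q (List.mem_cons_of_mem p hq)), h p (List.mem_cons_self (a := p) (l := ps))]

lemma prodSwap_fix (a m : ℕ) (x : Fin n) (hx : (x : ℕ) < a ∨ a + m < (x : ℕ)) :
    prodSwap n a m x = x := by
  induction m with
  | zero => rfl
  | succ m ih =>
    rw [prodSwap_succ, Equiv.Perm.mul_apply]
    have hs : (if h : a + m + 1 < n then sA n (a + m) h else 1) x = x := by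
      split
      · refine Equiv.swap_apply_of_ne_of_ne ?_ ?_ <;>
          (intro hcon; rw [Fin.ext_iff] at hcon; simp at hcon; omega)
      · rfl
    rw [hs]
    exact ih (by omega)

lemma prodSwap_apply (a : ℕ) : ∀ (m : ℕ), a + m < n → ∀ (x : Fin n),
    a ≤ (x : ℕ) → (x : ℕ) ≤ a + m →
    ((prodSwap n a m x : ℕ)) = if (x : ℕ) < a + m then (x : ℕ) + 1 else a := by
  intro m
  induction m with
  | zero =>
    intro hn x h1 h2
    have hxa : (x : ℕ) = a := le_antisymm (by simpa using h2) h1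
    simp [prodSwap_zero, hxa]
  | succ m ih =>
    intro hn x h1 h2
    have hn' : a + m + 1 < n := by omega
    rw [prodSwap_succ, Equiv.Perm.mul_apply, dif_pos hn']
    rcases Nat.lt_trichotomy (x : ℕ) (a + m) with hlt | heq | hgt
    · have hs : sA n (a + m) hn' x = x := by
        refine Equiv.swap_apply_of_ne_of_ne ?_ ?_ <;>
          (intro hcon; rw [Fin.ext_iff] at hcon; simp at hcon; omega)
      rw [hs, ih (by omega) x h1 (by omega)]
      rw [if_pos hlt, if_pos (by omega)]
    · have hs : sA n (a + m) hn' x = ⟨a + m + 1, hn'⟩ := by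
        have : x = (⟨a + m, Nat.lt_of_succ_lt hn'⟩ : Fin n) := by
          rw [Fin.ext_iff]; simpa using heq
        rw [this]; exact Equiv.swap_apply_left _ _
      rw [hs, prodSwap_fix n a m _ (by simp)]
      simp [heq]
    · have hxv : (x : ℕ) = a + m + 1 := by omega
      have hs : sA n (a + m) hn' x = ⟨a + m, Nat.lt_of_succ_lt hn'⟩ := by
        have : x = (⟨a + m + 1, hn'⟩ : Fin n) := by rw [Fin.ext_iff]; simpa using hxv
        rw [this]; exact Equiv.swap_apply_right _ _
      rw [hs, ih (by omega) _ (by simp) (by simp)]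
      rw [if_neg (by simp), if_neg (by omega)]

lemma wSeg_fix (a b : ℕ) (x : Fin n) (hx : (x : ℕ) < a ∨ b ≤ (x : ℕ)) :
    wSeg n a b x = x := by
  rw [wSeg_eq_prodSwap]
  rcases Nat.lt_or_ge (a + 1) b with hb | hb
  · exact prodSwap_fix n a (b - a - 1) x (by omega)
  · have h0 : b - a - 1 = 0 := by omega
    rw [h0, prodSwap_zero]; rfl

lemma wSeg_apply (l r : ℕ) (hr : r ≤ n) (x : Fin n) (h1 : l ≤ (x : ℕ))
    (h2 : (x : ℕ) < r) :
    ((wSeg n l r x : ℕ)) = if (x : ℕ) + 1 < r then (x : ℕ) + 1 else l := by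
  rw [wSeg_eq_prodSwap]
  have hm : l + (r - l - 1) = r - 1 := by omega
  have := prodSwap_apply n l (r - l - 1) (by omega) x h1 (by omega)
  rw [this, hm]
  split <;> split <;> omega

end PermLayer
section BlockLayer

lemma lb_mono (γ : List ℕ) {j k : ℕ} (h : j ≤ k) :
    (γ.take j).sum ≤ (γ.take k).sum := by
  have h1 : (γ.take k).take j = γ.take j := by rw [List.take_take, min_eq_left h]
  have h2 := List.sum_take_add_sum_drop (γ.take k) j
  rw [h1] at h2; omega

lemma rb_le_sum (γ : List ℕ) (k : ℕ) : (γ.take (k + 1)).sum ≤ γ.sum := by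
  have := List.sum_take_add_sum_drop γ (k + 1); omega

lemma lb_lt_rb (γ : List ℕ) (hpos : ∀ g ∈ γ, 0 < g) (k : ℕ) (hk : k < γ.length) :
    (γ.take k).sum < (γ.take (k + 1)).sum := by
  rw [List.sum_take_succ γ k hk]
  have := hpos (γ[k]) (List.getElem_mem hk)
  omega

lemma exists_block : ∀ (γ : List ℕ) (x : ℕ), x < γ.sum →
    ∃ k, k < γ.length ∧ (γ.take k).sum ≤ x ∧ x < (γ.take (k + 1)).sum
  | [], x, hx => absurd hx (by simp)
  | g :: γ, x, hx => by
    rcases Nat.lt_or_ge x g with h | h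
    · exact ⟨0, by simp, by simp, by simpa using h⟩
    · have hx' : x - g < γ.sum := by simp only [List.sum_cons] at hx; omega
      obtain ⟨k, hk, h1, h2⟩ := exists_block γ (x - g) hx'
      refine ⟨k + 1, by simpa using hk, ?_, ?_⟩ <;>
        simp only [List.take_succ_cons, List.sum_cons] <;> omega

def tauB (n : ℕ) (γ : List ℕ) (k : ℕ) : Equiv.Perm (Fin n) :=
  wSeg n ((γ.take k).sum) ((γ.take (k + 1)).sum)

lemma wGamma_eq (n : ℕ) (γ : List ℕ) :
    wGamma n γ = ((List.range γ.length).map (tauB n γ)).prod := rfl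

lemma tau_mem (n : ℕ) (γ : List ℕ) (hsum : γ.sum = n) (hpos : ∀ g ∈ γ, 0 < g)
    (k : ℕ) (hk : k < γ.length) (x : Fin n)
    (h1 : (γ.take k).sum ≤ (x : ℕ)) (h2 : (x : ℕ) < (γ.take (k + 1)).sum) :
    (γ.take k).sum ≤ ((tauB n γ k x : ℕ)) ∧
      ((tauB n γ k x : ℕ)) < (γ.take (k + 1)).sum := by
  unfold tauB
  rw [wSeg_apply n _ _ (by rw [← hsum]; exact rb_le_sum γ k) x h1 h2]
  have := lb_lt_rb γ hpos k hk
  split <;> omega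

lemma sigma_eq_tau (n : ℕ) (γ : List ℕ) (hsum : γ.sum = n) (hpos : ∀ g ∈ γ, 0 < g)
    (k : ℕ) (hk : k < γ.length) (x : Fin n)
    (h1 : (γ.take k).sum ≤ (x : ℕ)) (h2 : (x : ℕ) < (γ.take (k + 1)).sum) :
    wGamma n γ x = tauB n γ k x := by
  have hsplit : List.range γ.length =
      List.range (k + 1) ++ (List.range (γ.length - (k + 1))).map (fun i => (k + 1) + i) := by
    rw [← List.range_add]; congr 1; omega
  rw [wGamma_eq, hsplit, List.map_append, List.prod_append, Equiv.Perm.mul_apply]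
  have hfix2 : (((List.range (γ.length - (k + 1))).map (fun i => (k + 1) + i)).map
      (tauB n γ)).prod x = x := by
    rw [List.map_map]
    apply prod_fix
    intro p hp
    simp only [List.mem_map, List.mem_range, Function.comp] at hp
    obtain ⟨i, hi, rfl⟩ := hp
    exact wSeg_fix n _ _ x (Or.inl (lt_of_lt_of_le h2 (lb_mono γ (by omega))))
  rw [hfix2, List.range_succ, List.map_append, List.prod_append, Equiv.Perm.mul_apply]
  have hx : ((List.map (tauB n γ) [k]).prod) x = tauB n γ k x := by simp
  rw [hx]
  have hy := tau_mem n γ hsum hpos k hk x h1 h2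
  apply prod_fix
  intro p hp
  simp only [List.mem_map, List.mem_range] at hp
  obtain ⟨i, hi, rfl⟩ := hp
  exact wSeg_fix n _ _ _
    (Or.inr (le_trans (lb_mono γ (show i + 1 ≤ k by omega)) hy.1))

lemma sigma_mem (n : ℕ) (γ : List ℕ) (hsum : γ.sum = n) (hpos : ∀ g ∈ γ, 0 < g)
    (k : ℕ) (hk : k < γ.length) (x : Fin n)
    (h1 : (γ.take k).sum ≤ (x : ℕ)) (h2 : (x : ℕ) < (γ.take (k + 1)).sum) :
    (γ.take k).sum ≤ ((wGamma n γ x : ℕ)) ∧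
      ((wGamma n γ x : ℕ)) < (γ.take (k + 1)).sum := by
  rw [sigma_eq_tau n γ hsum hpos k hk x h1 h2]
  exact tau_mem n γ hsum hpos k hk x h1 h2

lemma sigma_succ (n : ℕ) (γ : List ℕ) (hsum : γ.sum = n) (hpos : ∀ g ∈ γ, 0 < g)
    (k : ℕ) (hk : k < γ.length) (x : Fin n)
    (h1 : (γ.take k).sum ≤ (x : ℕ)) (h2 : (x : ℕ) + 1 < (γ.take (k + 1)).sum) :
    ((wGamma n γ x : ℕ)) = (x : ℕ) + 1 := by
  rw [sigma_eq_tau n γ hsum hpos k hk x h1 (by omega)]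
  unfold tauB
  rw [wSeg_apply n _ _ (by rw [← hsum]; exact rb_le_sum γ k) x h1 (by omega)]
  rw [if_pos h2]

lemma tau_commute (n : ℕ) (γ : List ℕ) (hsum : γ.sum = n) (hpos : ∀ g ∈ γ, 0 < g)
    (k : ℕ) (hk : k < γ.length) :
    tauB n γ k * wGamma n γ = wGamma n γ * tauB n γ k := by
  ext x
  rw [Equiv.Perm.mul_apply, Equiv.Perm.mul_apply]
  obtain ⟨j, hj, hj1, hj2⟩ := exists_block γ (x : ℕ) (by rw [hsum]; exact x.isLt)
  rcases eq_or_ne j k with rfl | hne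
  · rw [sigma_eq_tau n γ hsum hpos j hj x hj1 hj2]
    have hy := tau_mem n γ hsum hpos j hj x hj1 hj2
    rw [sigma_eq_tau n γ hsum hpos j hj _ hy.1 hy.2]
  · have hσ : wGamma n γ x = tauB n γ j x := sigma_eq_tau n γ hsum hpos j hj x hj1 hj2
    have hy := tau_mem n γ hsum hpos j hj x hj1 hj2
    have hdisj : (γ.take (j + 1)).sum ≤ (γ.take k).sum ∨
        (γ.take (k + 1)).sum ≤ (γ.take j).sum := by
      rcases Nat.lt_or_ge j k with h | h
      · exact Or.inl (lb_mono γ (by omega))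
      · exact Or.inr (lb_mono γ (by omega))
    have hfix1 : tauB n γ k x = x := by
      unfold tauB
      apply wSeg_fix
      rcases hdisj with h | h
      · exact Or.inl (lt_of_lt_of_le hj2 h)
      · exact Or.inr (le_trans h hj1)
    have hfix2 : tauB n γ k (tauB n γ j x) = tauB n γ j x := by
      unfold tauB
      apply wSeg_fix
      rcases hdisj with h | h
      · exact Or.inl (lt_of_lt_of_le hy.2 h)
      · exact Or.inr (le_trans h hy.1)
    rw [hσ, hfix2, hfix1, hσ]

end BlockLayer
section MainLayer

lemma block_unique (γ : List ℕ) (k k' : ℕ) (x : ℕ)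
    (h1 : (γ.take k).sum ≤ x) (h2 : x < (γ.take (k + 1)).sum)
    (h1' : (γ.take k').sum ≤ x) (h2' : x < (γ.take (k' + 1)).sum) : k' = k := by
  by_contra hne
  rcases Nat.lt_or_ge k' k with h | h
  · have := lb_mono γ (show k' + 1 ≤ k by omega); omega
  · have := lb_mono γ (show k + 1 ≤ k' by omega); omega

lemma pair_elim (n : ℕ) (u : ℂ) (γ : List ℕ) (hpos : ∀ g ∈ γ, 0 < g) (hsum : γ.sum = n)
    (k : ℕ) (hk : k < γ.length) :
    ∀ (d : ℕ) (a b : Fin n) (M : List (Fin n)),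
      (a : ℕ) + d + 1 = (b : ℕ) → (γ.take k).sum ≤ (a : ℕ) →
      (b : ℕ) < (γ.take (k + 1)).sum → (∀ m ∈ M, (b : ℕ) < (m : ℕ)) →
      ∃ ε : ℂ, (ε = 1 ∨ ε = -1) ∧
        wH n u (wGamma n γ) * cL n u (a :: b :: M) -
          ε • (wH n u (wGamma n γ) * cL n u M) ∈ commSpan (HA n u) := by
  intro d
  induction d with
  | zero =>
    intro a b M hab h1 h2 hM
    have hσ : wGamma n γ a = b := by
      have := sigma_succ n γ hsum hpos k hk a h1 (by omega)
      rw [Fin.ext_iff, this]; omega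
    have hb : ∀ m ∈ M, m ≠ b := by
      intro m hm hcon
      have := hM m hm
      rw [hcon] at this
      omega
    refine ⟨(-1 : ℂ) ^ M.length, ?_, pair_end n u (wGamma n γ) a b M hσ hb⟩
    rcases Nat.even_or_odd M.length with he | ho
    · exact Or.inl he.neg_one_pow
    · exact Or.inr ho.neg_one_pow
  | succ d ih =>
    intro a b M hab h1 h2 hM
    have hval : ((wGamma n γ a : ℕ)) = (a : ℕ) + 1 :=
      sigma_succ n γ hsum hpos k hk a h1 (by omega)
    have hcond : ∀ m ∈ (b :: M), m ≠ wGamma n γ a := by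
      intro m hm hcon
      have hmv : (m : ℕ) = (a : ℕ) + 1 := by rw [hcon, hval]
      rcases List.mem_cons.mp hm with rfl | hm'
      · omega
      · have := hM m hm'; omega
    have hss := single_step n u (wGamma n γ) a (b :: M) hcond
    obtain ⟨ε', hε', hmem⟩ := ih (wGamma n γ a) b M (by omega) (by omega) h2 hM
    refine ⟨(-1 : ℂ) ^ (b :: M).length * ε', ?_, ?_⟩
    · have hpow : (-1 : ℂ) ^ (b :: M).length = 1 ∨ (-1 : ℂ) ^ (b :: M).length = -1 := by
        rcases Nat.even_or_odd (b :: M).length with he | ho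
        · exact Or.inl he.neg_one_pow
        · exact Or.inr ho.neg_one_pow
      rcases hpow with hp | hp <;> rcases hε' with rfl | rfl <;> rw [hp] <;> norm_num
    · exact trans_smul n u _ _ _ _ _ hss hmem

lemma main_red (n : ℕ) (u : ℂ) (γ : List ℕ) (hpos : ∀ g ∈ γ, 0 < g) (hsum : γ.sum = n) :
    ∀ (N : ℕ) (L : List (Fin n)), L.length ≤ N → L.Pairwise (· < ·) → Even L.length →
      ((∀ k < γ.length, Even (L.countP (fun i : Fin n =>
          decide ((γ.take k).sum ≤ (i : ℕ) ∧ (i : ℕ) < (γ.take (k + 1)).sum)))) →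
        ∃ ε : ℂ, (ε = 1 ∨ ε = -1) ∧
          wH n u (wGamma n γ) * cL n u L - ε • wH n u (wGamma n γ) ∈ commSpan (HA n u)) ∧
      ((¬ ∀ k < γ.length, Even (L.countP (fun i : Fin n =>
          decide ((γ.take k).sum ≤ (i : ℕ) ∧ (i : ℕ) < (γ.take (k + 1)).sum)))) →
        wH n u (wGamma n γ) * cL n u L ∈ commSpan (HA n u)) := by
  intro N
  induction N with
  | zero =>
    intro L hlen _ _
    have hL : L = [] := List.eq_nil_of_length_eq_zero (Nat.le_zero.mp hlen)
    subst hL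
    constructor
    · intro _
      refine ⟨1, Or.inl rfl, ?_⟩
      rw [cL_nil, mul_one, one_smul, sub_self]
      exact Submodule.zero_mem _
    · intro hne
      exact absurd (fun k hk => by simp) hne
  | succ N ih =>
    intro L hlen hsort heven
    rcases L with _ | ⟨a, T⟩
    · constructor
      · intro _
        refine ⟨1, Or.inl rfl, ?_⟩
        rw [cL_nil, mul_one, one_smul, sub_self]
        exact Submodule.zero_mem _
      · intro hne
        exact absurd (fun k hk => by simp) hne
    rcases T with _ | ⟨b, M⟩
    · exfalso; simp at heven
    -- L = a :: b :: M
    obtain ⟨k, hk, hak1, hak2⟩ := exists_block γ (a : ℕ) (by rw [hsum]; exact a.isLt)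
    have hab : a < b := (List.pairwise_cons.mp hsort).1 b (List.mem_cons_self (a := b) (l := M))
    have hsortT : (b :: M).Pairwise (· < ·) := (List.pairwise_cons.mp hsort).2
    have hMgt : ∀ m ∈ M, b < m := (List.pairwise_cons.mp hsortT).1
    have hsortM : M.Pairwise (· < ·) := (List.pairwise_cons.mp hsortT).2
    have habv : (a : ℕ) < (b : ℕ) := hab
    rcases Nat.lt_or_ge (b : ℕ) ((γ.take (k + 1)).sum) with hbk | hbk
    · -- same block : pair elimination
      obtain ⟨ε₀, hε₀, hmem₀⟩ := pair_elim n u γ hpos hsum k hk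
        ((b : ℕ) - (a : ℕ) - 1) a b M (by omega) hak1 hbk
        (fun m hm => hMgt m hm)
      have hlenM : M.length ≤ N := by
        simp only [List.length_cons] at hlen; omega
      have hevenM : Even M.length := by
        rcases heven with ⟨t, ht⟩
        simp only [List.length_cons] at ht
        exact ⟨t - 1, by omega⟩
      have ihM := ih M hlenM hsortM hevenM
      have hiff : ∀ k', k' < γ.length →
          (Even ((a :: b :: M).countP (fun i : Fin n =>
            decide ((γ.take k').sum ≤ (i : ℕ) ∧ (i : ℕ) < (γ.take (k' + 1)).sum))) ↔
           Even (M.countP (fun i : Fin n =>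
            decide ((γ.take k').sum ≤ (i : ℕ) ∧ (i : ℕ) < (γ.take (k' + 1)).sum)))) := by
        intro k' hk'
        rw [List.countP_cons, List.countP_cons]
        rcases eq_or_ne k' k with rfl | hne
        · have ha' : (decide ((γ.take k').sum ≤ (a : ℕ) ∧ (a : ℕ) < (γ.take (k' + 1)).sum)) = true := by
            simp only [decide_eq_true_eq]; exact ⟨hak1, hak2⟩
          have hb' : (decide ((γ.take k').sum ≤ (b : ℕ) ∧ (b : ℕ) < (γ.take (k' + 1)).sum)) = true := by
            simp only [decide_eq_true_eq]; exact ⟨by omega, hbk⟩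
          rw [ha', hb']
          simp only [if_true]
          constructor
          · rintro ⟨t, ht⟩; exact ⟨t - 1, by omega⟩
          · rintro ⟨t, ht⟩; exact ⟨t + 1, by omega⟩
        · have ha' : (decide ((γ.take k').sum ≤ (a : ℕ) ∧ (a : ℕ) < (γ.take (k' + 1)).sum)) = false := by
            simp only [decide_eq_false_iff_not]
            intro ⟨p1, p2⟩
            exact hne (block_unique γ k k' (a : ℕ) hak1 hak2 p1 p2)
          have hb' : (decide ((γ.take k').sum ≤ (b : ℕ) ∧ (b : ℕ) < (γ.take (k' + 1)).sum)) = false := by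
            simp only [decide_eq_false_iff_not]
            intro ⟨p1, p2⟩
            exact hne (block_unique γ k k' (b : ℕ) (by omega) hbk p1 p2)
          rw [ha', hb']
          simp
      constructor
      · intro hall
        obtain ⟨ε₁, hε₁, hmem₁⟩ := ihM.1 (fun k' hk' => (hiff k' hk').mp (hall k' hk'))
        refine ⟨ε₀ * ε₁, ?_, ?_⟩
        · rcases hε₀ with rfl | rfl <;> rcases hε₁ with rfl | rfl <;> norm_num
        · exact trans_smul n u _ _ _ ε₀ ε₁ hmem₀ hmem₁
      · intro hnall
        have hnM : ¬ ∀ k' < γ.length, Even (M.countP (fun i : Fin n =>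
            decide ((γ.take k').sum ≤ (i : ℕ) ∧ (i : ℕ) < (γ.take (k' + 1)).sum))) := by
          intro hc
          exact hnall (fun k' hk' => (hiff k' hk').mpr (hc k' hk'))
        have hmemM := ihM.2 hnM
        have hsum' := Submodule.add_mem _ hmem₀ (Submodule.smul_mem _ ε₀ hmemM)
        rwa [sub_add_cancel] at hsum'
    · -- a alone in its block : odd trick
      have hother : ∀ m ∈ (b :: M), (γ.take (k + 1)).sum ≤ (m : ℕ) := by
        intro m hm
        rcases List.mem_cons.mp hm with rfl | hm'
        · exact hbk
        · have := hMgt m hm'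
          have : (b : ℕ) < (m : ℕ) := this
          omega
      have hσmem := sigma_mem n γ hsum hpos k hk a hak1 hak2
      have hZ : wH n u (wGamma n γ) * cL n u (a :: b :: M) ∈ commSpan (HA n u) := by
        apply odd_trick n u (wGamma n γ) (tauB n γ k)
          (tau_commute n γ hsum hpos k hk) a (b :: M)
        · exact (sigma_eq_tau n γ hsum hpos k hk a hak1 hak2).symm
        · apply map_id_of_fix
          intro x hx
          exact wSeg_fix n _ _ x (Or.inr (hother x hx))
        · intro m hm hcon
          have := hother m hm
          rw [hcon] at this
          omega
        · rcases heven with ⟨t, ht⟩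
          simp only [List.length_cons] at ht ⊢
          exact ⟨t - 1, by omega⟩
      constructor
      · intro hall
        exfalso
        have hcnt := hall k hk
        rw [List.countP_cons, List.countP_cons] at hcnt
        have ha' : (decide ((γ.take k).sum ≤ (a : ℕ) ∧ (a : ℕ) < (γ.take (k + 1)).sum)) = true := by
          simp only [decide_eq_true_eq]; exact ⟨hak1, hak2⟩
        have hb' : (decide ((γ.take k).sum ≤ (b : ℕ) ∧ (b : ℕ) < (γ.take (k + 1)).sum)) = false := by
          simp only [decide_eq_false_iff_not]
          intro ⟨p1, p2⟩
          omega
        have hM0 : M.countP (fun i : Fin n =>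
            decide ((γ.take k).sum ≤ (i : ℕ) ∧ (i : ℕ) < (γ.take (k + 1)).sum)) = 0 := by
          apply List.countP_eq_zero.mpr
          intro m hm
          simp only [decide_eq_true_eq]
          intro ⟨p1, p2⟩
          have := hother m (List.mem_cons_of_mem b hm)
          omega
        rw [ha', hb', hM0] at hcnt
        simp at hcnt
      · intro _
        exact hZ

end MainLayer
lemma countP_sort_eq_card_filter (n : ℕ) (I : Finset (Fin n))
    (p : Fin n → Prop) [DecidablePred p] :
    (I.sort (· ≤ ·)).countP (fun i => decide (p i)) = (I.filter p).card := by
  have hperm := Finset.sort_perm_toList I (· ≤ ·)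
  rw [hperm.countP_eq]
  have h2 := Multiset.coe_countP p I.toList
  rw [Finset.coe_toList] at h2
  rw [← h2, Multiset.countP_eq_card_filter, Finset.card_def, Finset.filter_val]


/-- Let `γ` be a composition of `n` with blocks `B_j`, and let
`I ⊆ {1, …, n}` with `|I|` even, `I_j = I ∩ B_j`.  If every `|I_j|` is even then
`w_γ c_I ≡ ± w_γ` modulo commutators; otherwise `w_γ c_I` is a
commutator-combination. -/
theorem wGamma_clifford_reduction (n : ℕ) (hn : 2 ≤ n) (u : ℂ)
    (γ : List ℕ) (hpos : ∀ g ∈ γ, 0 < g) (hsum : γ.sum = n)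
    (I : Finset (Fin n)) (hI : Even I.card) :
    ((∀ k < γ.length,
        Even ((I.filter fun i : Fin n =>
          (γ.take k).sum ≤ (i : ℕ) ∧ (i : ℕ) < (γ.take (k + 1)).sum).card)) →
      ∃ ε : ℂ, (ε = 1 ∨ ε = -1) ∧
        wH n u (wGamma n γ) * cProd n u I - ε • wH n u (wGamma n γ) ∈
          commSpan (HA n u)) ∧
    ((¬ ∀ k < γ.length,
        Even ((I.filter fun i : Fin n =>
          (γ.take k).sum ≤ (i : ℕ) ∧ (i : ℕ) < (γ.take (k + 1)).sum).card)) →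
      wH n u (wGamma n γ) * cProd n u I ∈ commSpan (HA n u)) := by

  have hsort : (I.sort (· ≤ ·)).Pairwise (· < ·) := List.sortedLT_iff_pairwise.mp (Finset.sortedLT_sort I)
  have hlen : (I.sort (· ≤ ·)).length = I.card := Finset.length_sort _
  have hmr := main_red n u γ hpos hsum (I.sort (· ≤ ·)).length (I.sort (· ≤ ·))
    le_rfl hsort (by rw [hlen]; exact hI)
  have hcnt : ∀ k : ℕ,
      (I.sort (· ≤ ·)).countP (fun i : Fin n =>
        decide ((γ.take k).sum ≤ (i : ℕ) ∧ (i : ℕ) < (γ.take (k + 1)).sum)) =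
      (I.filter fun i : Fin n =>
        (γ.take k).sum ≤ (i : ℕ) ∧ (i : ℕ) < (γ.take (k + 1)).sum).card := by
    intro k
    exact countP_sort_eq_card_filter n I _
  constructor
  · intro hall
    obtain ⟨ε, hε, hmem⟩ := hmr.1 (fun k hk => by rw [hcnt k]; exact hall k hk)
    exact ⟨ε, hε, hmem⟩
  · intro hnall
    apply hmr.2
    intro hc
    apply hnall
    intro k hk
    rw [← hcnt k]
    exact hc k hk

end DAHCA
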